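/- Let T be a topological group acting continuously, minimally and proximally on a compact Hausdorff space X, and let L be a closed subgroup of finite index in T. Then the restricted action of L on X is also minimal and proximal. -/

import Mathlib

def IsMinimalFlow (G X : Type*) [Group G] [TopologicalSpace X] [MulAction G X] : Prop :=
  ∀ x : X, Dense (Set.range fun g : G => g • x)

def IsProximalFlow (G X : Type*) [Group G] [TopologicalSpace X] [MulAction G X] : Prop :=
  ∀ x y : X, ∃ z : X, (z, z) ∈ closure (Set.range fun g : G => (g • x, g • y))

open Set Filter Topology Pointwise

/-- From a point of the closure of a range, extract an ultrafilter on the domain whose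
image tends to that point. -/
lemma exists_ultrafilter_of_mem_closure_range {α β : Type*} [TopologicalSpace β] {f : α → β}
    {z : β} (h : z ∈ closure (Set.range f)) :
    ∃ U : Ultrafilter α, Filter.Tendsto f U (nhds z) := by
  rw [mem_closure_iff_ultrafilter] at h
  obtain ⟨U', hr, hle⟩ := h
  have hne : (Filter.comap f ↑U').NeBot := by
    refine Filter.comap_neBot fun s hs => ?_
    obtain ⟨b, hb1, hb2⟩ := U'.nonempty_of_mem (Filter.inter_mem hr hs)
    obtain ⟨a, rfl⟩ := hb1
    exact ⟨a, hb2⟩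
  refine ⟨Ultrafilter.of (Filter.comap f ↑U'), ?_⟩
  calc Filter.map f ↑(Ultrafilter.of (Filter.comap f ↑U'))
      ≤ Filter.map f (Filter.comap f ↑U') := Filter.map_mono (Ultrafilter.of_le _)
    _ ≤ ↑U' := Filter.map_comap_le
    _ ≤ nhds z := hle

/-- A closed nonempty invariant subset of a minimal flow is everything. -/
lemma eq_univ_of_closed_invariant {T X : Type*} [Group T] [TopologicalSpace X] [MulAction T X]
    (hmin : IsMinimalFlow T X) {S : Set X} (hS : IsClosed S) (hne : S.Nonempty)
    (hinv : ∀ t : T, ∀ x ∈ S, t • x ∈ S) : S = Set.univ := by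
  obtain ⟨x, hx⟩ := hne
  have hsub : Set.range (fun t : T => t • x) ⊆ S := by
    rintro _ ⟨t, rfl⟩; exact hinv t x hx
  have h1 : closure (Set.range fun t : T => t • x) = Set.univ := (hmin x).closure_eq
  apply Set.eq_univ_of_univ_subset
  calc Set.univ = closure (Set.range fun t : T => t • x) := h1.symm
    _ ⊆ closure S := closure_mono hsub
    _ = S := hS.closure_eq

/-- Proximality passes to finite-index subgroups. -/
lemma isProximalFlow_of_finiteIndex {T X : Type*} [Group T] [TopologicalSpace X]
    [CompactSpace X] [T2Space X] [MulAction T X] [ContinuousConstSMul T X]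
    (hprox : IsProximalFlow T X) (L : Subgroup T) [L.FiniteIndex] :
    IsProximalFlow L X := by
  intro x y
  obtain ⟨z, hz⟩ := hprox x y
  obtain ⟨U, hU⟩ := exists_ultrafilter_of_mem_closure_range hz
  obtain ⟨q, hq⟩ := (U.map (QuotientGroup.mk : T → T ⧸ L)).eq_pure_of_finite
  set s : T := Quotient.out q with hs
  have hsq : (QuotientGroup.mk s : T ⧸ L) = q := Quotient.out_eq q
  have hA : {t : T | (QuotientGroup.mk t : T ⧸ L) = q} ∈ U := by
    have h1 : {q} ∈ U.map (QuotientGroup.mk : T → T ⧸ L) := by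
      rw [hq]; exact Ultrafilter.mem_pure.2 rfl
    exact Ultrafilter.mem_map.1 h1
  have hcont : Continuous (fun p : X × X => ((s⁻¹ • p.1, s⁻¹ • p.2) : X × X)) :=
    (continuous_const_smul _).comp continuous_fst |>.prodMk
      ((continuous_const_smul _).comp continuous_snd)
  have h2 : Filter.Tendsto (fun t : T => (((s⁻¹ * t) • x, (s⁻¹ * t) • y) : X × X)) U
      (nhds (s⁻¹ • z, s⁻¹ • z)) := by
    have h3 := (hcont.tendsto (z, z)).comp hU
    simpa [Function.comp_def, mul_smul] using h3
  refine ⟨s⁻¹ • z, mem_closure_of_tendsto h2 ?_⟩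
  filter_upwards [hA] with t ht
  have hmem : s⁻¹ * t ∈ L := by
    have : (QuotientGroup.mk s : T ⧸ L) = QuotientGroup.mk t := by rw [hsq, ht]
    exact QuotientGroup.eq.mp this
  exact ⟨⟨s⁻¹ * t, hmem⟩, rfl⟩

/-- Minimality passes to finite-index normal subgroups (given proximality). -/
lemma isMinimalFlow_of_finiteIndex_normal {T X : Type*} [Group T] [TopologicalSpace X]
    [CompactSpace X] [T2Space X] [MulAction T X] [ContinuousConstSMul T X]
    (hmin : IsMinimalFlow T X) (hprox : IsProximalFlow T X)
    (K : Subgroup T) [hN : K.Normal] [K.FiniteIndex] :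
    IsMinimalFlow K X := by
  rcases isEmpty_or_nonempty X with hX | hX
  · exact fun x => (hX.false x).elim
  have hproxK : IsProximalFlow K X := isProximalFlow_of_finiteIndex hprox K
  -- The collection of nonempty closed K-invariant subsets of X.
  set 𝒞 : Set (Set X) := {A | A.Nonempty ∧ IsClosed A ∧ ∀ k ∈ K, ∀ x ∈ A, k • x ∈ A} with h𝒞
  -- Zorn: a minimal element of 𝒞 exists.
  obtain ⟨M, -, hM⟩ : ∃ M, M ⊆ Set.univ ∧ Minimal (· ∈ 𝒞) M := by
    apply zorn_superset_nonempty 𝒞 ?_ Set.univ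
      ⟨Set.univ_nonempty, isClosed_univ, fun _ _ _ _ => Set.mem_univ _⟩
    intro c hc hchain hcne
    refine ⟨⋂₀ c, ⟨?_, ?_, ?_⟩, fun A hA => Set.sInter_subset_of_mem hA⟩
    · haveI : Nonempty c := hcne.to_subtype
      have hdir : DirectedOn (· ⊇ ·) c := by
        intro A hA B hB
        rcases hchain.total hA hB with h | h
        · exact ⟨A, hA, subset_rfl, h⟩
        · exact ⟨B, hB, h, subset_rfl⟩
      exact IsCompact.nonempty_sInter_of_directed_nonempty_isCompact_isClosed
        hdir (fun A hA => (hc hA).1) (fun A hA => (hc hA).2.1.isCompact)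
        (fun A hA => (hc hA).2.1)
    · exact isClosed_sInter fun A hA => (hc hA).2.1
    · intro k hk x hx
      exact Set.mem_sInter.2 fun A hA => (hc hA).2.2 k hk x (Set.mem_sInter.1 hx A hA)
  -- every translate s • M is in 𝒞 and is minimal in 𝒞
  have htrans : ∀ s : T, Minimal (· ∈ 𝒞) (s • M) := by
    have hmem : ∀ s : T, (s • M) ∈ 𝒞 := by
      intro s
      refine ⟨hM.prop.1.smul_set, hM.prop.2.1.smul s, ?_⟩
      rintro k hk _ ⟨m, hm, rfl⟩
      have hk' : s⁻¹ * k * s ∈ K := by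
        have := hN.conj_mem k hk s⁻¹
        simpa using this
      refine ⟨(s⁻¹ * k * s) • m, hM.prop.2.2 _ hk' m hm, ?_⟩
      simp only [← mul_smul]
      congr 1
      group
    intro s
    refine ⟨hmem s, fun A hA hAs => ?_⟩
    have h1 : s⁻¹ • A ∈ 𝒞 := by
      obtain ⟨hA1, hA2, hA3⟩ := hA
      refine ⟨hA1.smul_set, hA2.smul s⁻¹, ?_⟩
      rintro k hk _ ⟨a, ha, rfl⟩
      have hk' : s * k * s⁻¹ ∈ K := hN.conj_mem k hk s
      refine ⟨(s * k * s⁻¹) • a, hA3 _ hk' a ha, ?_⟩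
      simp only [← mul_smul]
      congr 1
      group
    have h2 : s⁻¹ • A ⊆ M := by
      have := Set.smul_set_mono (a := s⁻¹) hAs
      rwa [inv_smul_smul] at this
    have h3 : M ⊆ s⁻¹ • A := hM.2 h1 h2
    have := Set.smul_set_mono (a := s) h3
    rwa [smul_inv_smul] at this
  -- any two translates of M coincide, by proximality of the K-action
  have heq : ∀ s s' : T, s • M = s' • M := by
    intro s s'
    obtain ⟨a, ha⟩ := (htrans s).prop.1
    obtain ⟨b, hb⟩ := (htrans s').prop.1
    obtain ⟨z, hz⟩ := hproxK a b
    have hsub : Set.range (fun k : K => ((k • a, k • b) : X × X)) ⊆ (s • M) ×ˢ (s' • M) := by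
      rintro _ ⟨k, rfl⟩
      exact ⟨(htrans s).prop.2.2 k k.2 a ha, (htrans s').prop.2.2 k k.2 b hb⟩
    have hz' : z ∈ (s • M) ∩ (s' • M) := by
      have hcl : closure (Set.range fun k : K => ((k • a, k • b) : X × X)) ⊆
          (s • M) ×ˢ (s' • M) :=
        closure_minimal hsub ((htrans s).prop.2.1.prod (htrans s').prop.2.1)
      have := hcl hz
      exact ⟨this.1, this.2⟩
    have hint : (s • M) ∩ (s' • M) ∈ 𝒞 :=
      ⟨⟨z, hz'⟩, (htrans s).prop.2.1.inter (htrans s').prop.2.1,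
        fun k hk x hx => ⟨(htrans s).prop.2.2 k hk x hx.1, (htrans s').prop.2.2 k hk x hx.2⟩⟩
    have e1 : (s • M) ⊆ (s • M) ∩ (s' • M) := (htrans s).2 hint Set.inter_subset_left
    have e2 : (s' • M) ⊆ (s • M) ∩ (s' • M) := (htrans s').2 hint Set.inter_subset_right
    exact subset_antisymm (fun x hx => (e1 hx).2) (fun x hx => (e2 hx).1)
  -- hence M is T-invariant, so M = univ by minimality of the T-flow
  have hMuniv : M = Set.univ := by
    refine eq_univ_of_closed_invariant hmin hM.prop.2.1 hM.prop.1 ?_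
    intro t x hx
    have h1 : t • x ∈ t • M := Set.smul_mem_smul_set hx
    rw [heq t 1, one_smul] at h1
    exact h1
  -- conclude: every K-orbit is dense
  intro x
  rw [dense_iff_closure_eq]
  have hC : closure (Set.range fun k : K => k • x) ∈ 𝒞 := by
    refine ⟨⟨x, subset_closure ⟨1, one_smul _ _⟩⟩, isClosed_closure, ?_⟩
    intro k hk y hy
    have h1 : (k : T) • closure (Set.range fun k : K => k • x) ⊆
        closure (Set.range fun k : K => k • x) := by
      rw [← closure_smul]
      apply closure_mono
      rintro _ ⟨_, ⟨k', rfl⟩, rfl⟩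
      exact ⟨(⟨k, hk⟩ : K) * k', by simp [Subgroup.smul_def, mul_smul]⟩
    exact h1 (Set.smul_mem_smul_set hy)
  have := hM.2 hC (by rw [hMuniv]; exact Set.subset_univ _)
  rw [hMuniv] at this
  exact Set.eq_univ_of_univ_subset this

theorem restriction_to_finiteIndex_closed_subgroup_minimal_proximal
    (T X : Type*) [Group T] [TopologicalSpace T] [IsTopologicalGroup T]
    [TopologicalSpace X] [CompactSpace X] [T2Space X]
    [MulAction T X] [ContinuousSMul T X]
    (hmin : IsMinimalFlow T X) (hprox : IsProximalFlow T X)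
    (L : Subgroup T) (hL : IsClosed (L : Set T)) [L.FiniteIndex] :
    IsMinimalFlow L X ∧ IsProximalFlow L X := by
  constructor
  · -- minimality: use the normal core of L
    have hK : IsMinimalFlow L.normalCore X :=
      isMinimalFlow_of_finiteIndex_normal hmin hprox L.normalCore
    intro x
    refine ((hK x).mono ?_)
    rintro _ ⟨k, rfl⟩
    exact ⟨⟨(k : T), L.normalCore_le k.2⟩, rfl⟩
  · exact isProximalFlow_of_finiteIndex hprox L
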